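/- Let ψ : ℝ³ → ℍ be differentiable at a point x, with ψ(y) a purely imaginary unit quaternion for every y. Then for all vectors v, w ∈ ℝ³: |Dψ(x)v · Dψ(x)w − Dψ(x)w · Dψ(x)v| = |Re( ψ(x) · (Dψ(x)v · Dψ(x)w − Dψ(x)w · Dψ(x)v) )|. (This is the pointwise identity |ψ*ω_{S²}| = (8π)⁻¹ |dψ ∧ dψ| used in the proof of existence of minimizers.) -/

import Mathlib

open Quaternion

/-- For a map `ψ : ℝ³ → ℍ` differentiable at `x` taking values in the purely
imaginary unit quaternions, and all directions `v, w`: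
`|Dψ(x)v · Dψ(x)w − Dψ(x)w · Dψ(x)v| = |Re(ψ(x)(Dψ(x)v·Dψ(x)w − Dψ(x)w·Dψ(x)v))|`.
This is the pointwise identity `|ψ*ω_{S²}| = (8π)⁻¹|dψ ∧ dψ|`. -/
theorem pullback_norm_identity (ψ : EuclideanSpace ℝ (Fin 3) → ℍ[ℝ])
    (x : EuclideanSpace ℝ (Fin 3)) (hd : DifferentiableAt ℝ ψ x)
    (h_im : ∀ y, (ψ y).re = 0) (h_unit : ∀ y, ‖ψ y‖ = 1)
    (v w : EuclideanSpace ℝ (Fin 3)) :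
    ‖fderiv ℝ ψ x v * fderiv ℝ ψ x w - fderiv ℝ ψ x w * fderiv ℝ ψ x v‖ =
      |(ψ x * (fderiv ℝ ψ x v * fderiv ℝ ψ x w
          - fderiv ℝ ψ x w * fderiv ℝ ψ x v)).re| := by
  set a := fderiv ℝ ψ x v with ha
  set b := fderiv ℝ ψ x w with hb
  set p := ψ x with hp
  set c := a * b - b * a with hc
  -- ψ y * ψ y = -1 everywhere
  have h1 : ∀ y, ψ y * ψ y = (-1 : ℍ[ℝ]) := by
    intro y
    have hs : star (ψ y) = -ψ y := Quaternion.star_eq_neg.mpr (h_im y)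
    have h3 : normSq (ψ y) = 1 := by
      rw [Quaternion.normSq_eq_norm_mul_self, h_unit y, one_mul]
    have h2 : ψ y * star (ψ y) = 1 := by
      rw [Quaternion.self_mul_star, h3]; simp
    rw [hs, mul_neg] at h2
    exact neg_eq_iff_eq_neg.mp h2
  -- derivative of the constant function ψ * ψ is zero
  have hzero : fderiv ℝ (fun y => ψ y * ψ y) x = 0 := by
    have : (fun y => ψ y * ψ y) = fun _ => (-1 : ℍ[ℝ]) := funext h1
    rw [this]; exact fderiv_const_apply _
  have hmul := fderiv_mul' hd hd
  rw [show (ψ * ψ) = (fun y => ψ y * ψ y) from rfl, hzero] at hmul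
  have hAv : ∀ u : EuclideanSpace ℝ (Fin 3),
      p * fderiv ℝ ψ x u + fderiv ℝ ψ x u * p = 0 := by
    intro u
    have := congrArg (fun (L : EuclideanSpace ℝ (Fin 3) →L[ℝ] ℍ[ℝ]) => L u) hmul.symm
    simpa [ContinuousLinearMap.smulRight_apply, smul_eq_mul] using this
  have hA : p * a + a * p = 0 := hAv v
  have hB : p * b + b * p = 0 := hAv w
  have hA' : p * a = -(a * p) := eq_neg_of_add_eq_zero_left hA
  have hB' : p * b = -(b * p) := eq_neg_of_add_eq_zero_left hB
  -- p commutes with c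
  have hcomm : p * c = c * p := by
    have hab : p * (a * b) = (a * b) * p := by
      calc p * (a * b) = (p * a) * b := by rw [mul_assoc]
      _ = -(a * (p * b)) := by rw [hA']; noncomm_ring
      _ = -(a * -(b * p)) := by rw [hB']
      _ = (a * b) * p := by noncomm_ring
    have hba : p * (b * a) = (b * a) * p := by
      calc p * (b * a) = (p * b) * a := by rw [mul_assoc]
      _ = -(b * (p * a)) := by rw [hB']; noncomm_ring
      _ = -(b * -(a * p)) := by rw [hA']
      _ = (b * a) * p := by noncomm_ring
    calc p * c = p * (a * b) - p * (b * a) := by rw [hc]; noncomm_ring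
    _ = (a * b) * p - (b * a) * p := by rw [hab, hba]
    _ = c * p := by rw [hc]; noncomm_ring
  -- c has zero real part
  have hcre : c.re = 0 := by
    simp only [hc, Quaternion.re_sub, Quaternion.re_mul]
    ring
  have hcs : star c = -c := Quaternion.star_eq_neg.mpr hcre
  have hps : star p = -p := Quaternion.star_eq_neg.mpr (h_im x)
  -- p * c is self-adjoint, hence real
  have hstar : star (p * c) = p * c := by
    rw [star_mul, hcs, hps]
    calc -c * -p = c * p := by noncomm_ring
    _ = p * c := hcomm.symm
  have hreal : p * c = (((p * c).re : ℝ) : ℍ[ℝ]) := by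
    ext
    · simp
    · have := congrArg QuaternionAlgebra.imI hstar
      simp only [Quaternion.imI_star] at this
      simp only [Quaternion.imI_coe]
      linarith
    · have := congrArg QuaternionAlgebra.imJ hstar
      simp only [Quaternion.imJ_star] at this
      simp only [Quaternion.imJ_coe]
      linarith
    · have := congrArg QuaternionAlgebra.imK hstar
      simp only [Quaternion.imK_star] at this
      simp only [Quaternion.imK_coe]
      linarith
  set r : ℝ := (p * c).re with hr
  -- c = (-r) • p
  have hpp : p * p = -1 := h1 x
  have hcval : c = (-r) • p := by
    have h5 : p * (p * c) = p * ((r : ℝ) : ℍ[ℝ]) := by rw [← hreal]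
    rw [← mul_assoc, hpp] at h5
    have h6 : -c = p * ((r : ℝ) : ℍ[ℝ]) := by simpa using h5
    have h7 : p * ((r : ℝ) : ℍ[ℝ]) = r • p := by
      rw [← Quaternion.coe_commutes, Quaternion.coe_mul_eq_smul]
    rw [h7] at h6
    have := congrArg Neg.neg h6
    simpa [neg_smul] using this
  rw [hcval]
  rw [norm_smul, h_unit x]
  simp [Real.norm_eq_abs, abs_neg]
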